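/- Let u and ũ be two solutions of the deterministic dyadic system with the same continuous forcing w and initial data in H₊, and set z_j = u_j − ũ_j, y_j = u_j + ũ_j. Then the quantity ψ_n(t) = ∑_{j=0}^n z_j(t)²/2^j satisfies, for c ≥ 1, the identity ψ_n(t) − ψ_n(0) = −∫₀ᵗ ∑_{j=0}^n 2^{(c−1)j} z_j(s)² y_{j+1}(s) ds − ∫₀ᵗ 2^{(c−1)n} z_n(s) z_{n+1}(s) y_n(s) ds. -/

import Mathlib

theorem stmt_10 (T σ c : ℝ) (hT : 0 ≤ T) (hσ : 0 ≤ σ) (hc : 1 ≤ c)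
    (w : ℝ → ℝ) (hw : Continuous w) (hw0 : w 0 = 0)
    (u v : ℕ → ℝ → ℝ)
    (hucont : ∀ j, ContinuousOn (u j) (Set.Icc 0 T))
    (hvcont : ∀ j, ContinuousOn (v j) (Set.Icc 0 T))
    (hupos : ∀ j, 1 ≤ j → ∀ t ∈ Set.Icc (0:ℝ) T, 0 ≤ u j t)
    (hvpos : ∀ j, 1 ≤ j → ∀ t ∈ Set.Icc (0:ℝ) T, 0 ≤ v j t)
    (hul2 : ∀ t ∈ Set.Icc (0:ℝ) T, Summable fun j => (u j t) ^ 2)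
    (hvl2 : ∀ t ∈ Set.Icc (0:ℝ) T, Summable fun j => (v j t) ^ 2)
    (hu0 : ∀ t ∈ Set.Icc (0:ℝ) T,
      u 0 t = u 0 0 - (∫ s in (0:ℝ)..t, u 0 s * u 1 s) + σ * w t)
    (hv0 : ∀ t ∈ Set.Icc (0:ℝ) T,
      v 0 t = v 0 0 - (∫ s in (0:ℝ)..t, v 0 s * v 1 s) + σ * w t)
    (huode : ∀ j, 1 ≤ j → ∀ t ∈ Set.Icc (0:ℝ) T,
      HasDerivAt (u j)
        (-(2:ℝ) ^ (c * j) * u j t * u (j + 1) t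
          + (2:ℝ) ^ (c * (j - 1 : ℝ)) * (u (j - 1) t) ^ 2) t)
    (hvode : ∀ j, 1 ≤ j → ∀ t ∈ Set.Icc (0:ℝ) T,
      HasDerivAt (v j)
        (-(2:ℝ) ^ (c * j) * v j t * v (j + 1) t
          + (2:ℝ) ^ (c * (j - 1 : ℝ)) * (v (j - 1) t) ^ 2) t) :
    ∀ n : ℕ, ∀ t ∈ Set.Icc (0:ℝ) T,
      (∑ j ∈ Finset.range (n + 1), (u j t - v j t) ^ 2 / 2 ^ j)
        - (∑ j ∈ Finset.range (n + 1), (u j 0 - v j 0) ^ 2 / 2 ^ j)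
      = -(∫ s in (0:ℝ)..t, ∑ j ∈ Finset.range (n + 1),
            (2:ℝ) ^ ((c - 1) * j) * (u j s - v j s) ^ 2 * (u (j + 1) s + v (j + 1) s))
        - ∫ s in (0:ℝ)..t,
            (2:ℝ) ^ ((c - 1) * n) * (u n s - v n s) * (u (n + 1) s - v (n + 1) s)
              * (u n s + v n s) := by
  have h2 : (0:ℝ) < 2 := by norm_num
  -- continuity of the j = 0 integrand
  have hcont_q : ContinuousOn (fun s => u 0 s * u 1 s - v 0 s * v 1 s) (Set.Icc 0 T) :=
    ((hucont 0).mul (hucont 1)).sub ((hvcont 0).mul (hvcont 1))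
  -- integral equation for z0 = u0 - v0
  have hz0eq : ∀ r ∈ Set.Icc (0:ℝ) T,
      u 0 r - v 0 r = (u 0 0 - v 0 0)
        - ∫ s in (0:ℝ)..r, (u 0 s * u 1 s - v 0 s * v 1 s) := by
    intro r hr
    have hsub : Set.uIcc (0:ℝ) r ⊆ Set.Icc 0 T := by
      rw [Set.uIcc_of_le hr.1]; exact Set.Icc_subset_Icc le_rfl hr.2
    have h1 : IntervalIntegrable (fun s => u 0 s * u 1 s) MeasureTheory.volume 0 r :=
      (((hucont 0).mul (hucont 1)).mono hsub).intervalIntegrable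
    have h1' : IntervalIntegrable (fun s => v 0 s * v 1 s) MeasureTheory.volume 0 r :=
      (((hvcont 0).mul (hvcont 1)).mono hsub).intervalIntegrable
    rw [intervalIntegral.integral_sub h1 h1', hu0 r hr, hv0 r hr]
    ring
  -- derivative of z0 at interior points
  have hz0deriv : ∀ s ∈ Set.Ioo (0:ℝ) T, HasDerivAt (fun r => u 0 r - v 0 r)
      (-(u 0 s * u 1 s - v 0 s * v 1 s)) s := by
    intro s hs
    have hmem : Set.Icc (0:ℝ) T ∈ nhds s := Icc_mem_nhds hs.1 hs.2
    have hca : ContinuousAt (fun r => u 0 r * u 1 r - v 0 r * v 1 r) s :=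
      hcont_q.continuousAt hmem
    have hsub : Set.uIcc (0:ℝ) s ⊆ Set.Icc 0 T := by
      rw [Set.uIcc_of_le hs.1.le]; exact Set.Icc_subset_Icc le_rfl hs.2.le
    have hint : IntervalIntegrable (fun r => u 0 r * u 1 r - v 0 r * v 1 r)
        MeasureTheory.volume 0 s := (hcont_q.mono hsub).intervalIntegrable
    have hmeas : StronglyMeasurableAtFilter
        (fun r => u 0 r * u 1 r - v 0 r * v 1 r) (nhds s) :=
      ⟨Set.Icc 0 T, hmem, hcont_q.aestronglyMeasurable measurableSet_Icc⟩
    have hI : HasDerivAt (fun r => ∫ x in (0:ℝ)..r, (u 0 x * u 1 x - v 0 x * v 1 x))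
        (u 0 s * u 1 s - v 0 s * v 1 s) s :=
      intervalIntegral.integral_hasDerivAt_right hint hmeas hca
    have hC : HasDerivAt
        (fun r => (u 0 0 - v 0 0) - ∫ x in (0:ℝ)..r, (u 0 x * u 1 x - v 0 x * v 1 x))
        (-(u 0 s * u 1 s - v 0 s * v 1 s)) s := by
      exact hI.const_sub (u 0 0 - v 0 0)
    exact hC.congr_of_eventuallyEq
      (Filter.eventuallyEq_of_mem hmem (fun r hr => hz0eq r hr))
  -- derivative of z_{k+1}
  have hzderiv : ∀ k : ℕ, ∀ s ∈ Set.Icc (0:ℝ) T,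
      HasDerivAt (fun r => u (k+1) r - v (k+1) r)
        ((-(2:ℝ) ^ (c * ((k:ℝ)+1)) * u (k+1) s * u (k+2) s
            + (2:ℝ) ^ (c * (k:ℝ)) * (u k s) ^ 2)
         - (-(2:ℝ) ^ (c * ((k:ℝ)+1)) * v (k+1) s * v (k+2) s
            + (2:ℝ) ^ (c * (k:ℝ)) * (v k s) ^ 2)) s := by
    intro k s hs
    have hu' := huode (k+1) (by omega) s hs
    have hv' := hvode (k+1) (by omega) s hs
    simp only [Nat.add_sub_cancel, Nat.cast_add, Nat.cast_one, add_sub_cancel_right] at hu' hv'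
    exact hu'.sub hv'
  -- power identities
  have hpow : ∀ m : ℕ, (2:ℝ) ^ (c * (m:ℝ)) = (2:ℝ) ^ ((c-1) * (m:ℝ)) * 2 ^ m := by
    intro m
    rw [← Real.rpow_natCast 2 m, ← Real.rpow_add h2]
    congr 1
    ring
  have hpow' : ∀ m : ℕ, (2:ℝ) ^ (c * ((m:ℝ)+1)) = (2:ℝ) ^ ((c-1) * ((m:ℝ)+1)) * 2 ^ (m+1) := by
    intro m
    rw [← Real.rpow_natCast 2 (m+1), ← Real.rpow_add h2]
    congr 1
    push_cast
    ring
  -- the main derivative computation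
  have main : ∀ m : ℕ, ∀ s ∈ Set.Ioo (0:ℝ) T,
      HasDerivAt (fun r => ∑ j ∈ Finset.range (m+1), (u j r - v j r) ^ 2 / 2 ^ j)
        (-(∑ j ∈ Finset.range (m+1),
            (2:ℝ) ^ ((c-1) * j) * (u j s - v j s) ^ 2 * (u (j+1) s + v (j+1) s))
          - (2:ℝ) ^ ((c-1) * m) * (u m s - v m s) * (u (m+1) s - v (m+1) s)
            * (u m s + v m s)) s := by
    intro m
    induction m with
    | zero =>
      intro s hs
      have h0 : HasDerivAt (fun r => (u 0 r - v 0 r) ^ 2 / 2 ^ (0:ℕ))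
          (((2:ℕ):ℝ) * (u 0 s - v 0 s) ^ (2-1) * (-(u 0 s * u 1 s - v 0 s * v 1 s))
            / 2 ^ (0:ℕ)) s :=
        ((hz0deriv s hs).pow 2).div_const _
      have hfun : (fun r => ∑ j ∈ Finset.range (0+1), (u j r - v j r) ^ 2 / 2 ^ j)
          = fun r => (u 0 r - v 0 r) ^ 2 / 2 ^ (0:ℕ) := by
        funext r; rw [Finset.sum_range_one]
      rw [hfun, Finset.sum_range_one]
      convert h0 using 1
      norm_num
      ring
    | succ m ih =>
      intro s hs
      have hd := hzderiv m s ⟨hs.1.le, hs.2.le⟩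
      have hterm : HasDerivAt (fun r => (u (m+1) r - v (m+1) r) ^ 2 / 2 ^ (m+1))
          (((2:ℕ):ℝ) * (u (m+1) s - v (m+1) s) ^ (2-1) *
            ((-(2:ℝ) ^ (c * ((m:ℝ)+1)) * u (m+1) s * u (m+2) s
                + (2:ℝ) ^ (c * (m:ℝ)) * (u m s) ^ 2)
             - (-(2:ℝ) ^ (c * ((m:ℝ)+1)) * v (m+1) s * v (m+2) s
                + (2:ℝ) ^ (c * (m:ℝ)) * (v m s) ^ 2)) / 2 ^ (m+1)) s :=
        (hd.pow 2).div_const _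
      have hsum := (ih s hs).add hterm
      have hfun : (fun r => ∑ j ∈ Finset.range (m+1+1), (u j r - v j r) ^ 2 / 2 ^ j)
          = fun r => (∑ j ∈ Finset.range (m+1), (u j r - v j r) ^ 2 / 2 ^ j)
              + (u (m+1) r - v (m+1) r) ^ 2 / 2 ^ (m+1) := by
        funext r; rw [Finset.sum_range_succ]
      rw [hfun]
      refine hsum.congr_deriv (Eq.symm ?_)
      rw [Finset.sum_range_succ]
      have hm1 : ((m+1:ℕ):ℝ) = (m:ℝ) + 1 := by push_cast; ring
      rw [hm1, hpow' m, hpow m]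
      have h2m : (2:ℝ) ^ (m+1) ≠ 0 := by positivity
      have h2m' : (2:ℝ) ^ m ≠ 0 := by positivity
      field_simp
      ring
  -- FTC
  intro n t ht
  obtain ⟨ht0, htT⟩ := ht
  have husub : Set.uIcc (0:ℝ) t ⊆ Set.Icc 0 T := by
    rw [Set.uIcc_of_le ht0]; exact Set.Icc_subset_Icc le_rfl htT
  have hScont : ContinuousOn (fun s => ∑ j ∈ Finset.range (n+1),
      (2:ℝ) ^ ((c-1) * j) * (u j s - v j s) ^ 2 * (u (j+1) s + v (j+1) s)) (Set.Icc 0 T) := by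
    apply continuousOn_finset_sum
    intro j _
    exact (continuousOn_const.mul (((hucont j).sub (hvcont j)).pow 2)).mul
      ((hucont (j+1)).add (hvcont (j+1)))
  have hAcont : ContinuousOn (fun s => (2:ℝ) ^ ((c-1) * n) * (u n s - v n s)
      * (u (n+1) s - v (n+1) s) * (u n s + v n s)) (Set.Icc 0 T) :=
    (((continuousOn_const.mul ((hucont n).sub (hvcont n))).mul
      ((hucont (n+1)).sub (hvcont (n+1)))).mul ((hucont n).add (hvcont n)))
  have hSint : IntervalIntegrable (fun s => ∑ j ∈ Finset.range (n+1),
      (2:ℝ) ^ ((c-1) * j) * (u j s - v j s) ^ 2 * (u (j+1) s + v (j+1) s))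
      MeasureTheory.volume 0 t := (hScont.mono husub).intervalIntegrable
  have hAint : IntervalIntegrable (fun s => (2:ℝ) ^ ((c-1) * n) * (u n s - v n s)
      * (u (n+1) s - v (n+1) s) * (u n s + v n s)) MeasureTheory.volume 0 t :=
    (hAcont.mono husub).intervalIntegrable
  have hGint : IntervalIntegrable (fun s =>
      -(∑ j ∈ Finset.range (n+1),
          (2:ℝ) ^ ((c-1) * j) * (u j s - v j s) ^ 2 * (u (j+1) s + v (j+1) s))
        - (2:ℝ) ^ ((c-1) * n) * (u n s - v n s) * (u (n+1) s - v (n+1) s)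
          * (u n s + v n s)) MeasureTheory.volume 0 t := hSint.neg.sub hAint
  have hFcont : ContinuousOn (fun r => ∑ j ∈ Finset.range (n+1),
      (u j r - v j r) ^ 2 / 2 ^ j) (Set.Icc 0 t) := by
    apply ContinuousOn.mono _ (Set.Icc_subset_Icc le_rfl htT)
    apply continuousOn_finset_sum
    intro j _
    exact (((hucont j).sub (hvcont j)).pow 2).div_const _
  have key := intervalIntegral.integral_eq_sub_of_hasDeriv_right_of_le ht0 hFcont
    (fun x hx => (main n x ⟨hx.1, lt_of_lt_of_le hx.2 htT⟩).hasDerivWithinAt) hGint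
  have hSnegint : IntervalIntegrable (fun s =>
      -(∑ j ∈ Finset.range (n+1),
          (2:ℝ) ^ ((c-1) * j) * (u j s - v j s) ^ 2 * (u (j+1) s + v (j+1) s)))
      MeasureTheory.volume 0 t := hSint.neg
  rw [intervalIntegral.integral_sub hSnegint hAint] at key
  rw [intervalIntegral.integral_neg] at key
  linarith [key]
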